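/- Let π be a probability density on ℝ^p with f = -log π m-strongly convex and minimizer θ*. Then for any a > 2, ∫ ‖θ-θ*‖₂^a π(θ) dθ ≤ (p/m)^{a/2} · 2^{a-1} (1 + (1 + a/p)^{a/2 - 1}). -/

import Mathlib

open MeasureTheory

lemma aux_rpow_exp {x k : ℝ} (hx : 0 ≤ x) (hk : 0 < k) :
    x ^ k ≤ (k / Real.exp 1) ^ k * Real.exp x := by
  rcases eq_or_lt_of_le hx with h | h
  · rw [← h, Real.zero_rpow hk.ne']
    positivity
  · have hke : 0 < k / Real.exp 1 := by positivity
    rw [Real.rpow_def_of_pos h, Real.rpow_def_of_pos hke, ← Real.exp_add]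
    apply Real.exp_le_exp.2
    have hlog : Real.log (x / k) ≤ x / k - 1 := Real.log_le_sub_one_of_pos (by positivity)
    rw [Real.log_div h.ne' hk.ne'] at hlog
    have hlogke : Real.log (k / Real.exp 1) = Real.log k - 1 := by
      rw [Real.log_div hk.ne' (Real.exp_pos 1).ne', Real.log_exp]
    rw [hlogke]
    have := mul_le_mul_of_nonneg_left hlog hk.le
    have hxk : k * (x / k - 1) = x - k := by field_simp
    nlinarith


lemma aux_two_pow {a : ℝ} (ha : 3 ≤ a) : a + 1 ≤ 2 ^ (a - 1) := by
  have h1 : (2:ℝ) ^ (a-1) = 4 * 2 ^ (a-3) := by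
    rw [show a - 1 = 2 + (a - 3) by ring, Real.rpow_add (by norm_num),
      show (2:ℝ) ^ (2:ℝ) = 4 by
        rw [show (2:ℝ) = ((2:ℕ):ℝ) from by norm_num, Real.rpow_natCast]; norm_num]
  have h2 : (2:ℝ) ^ (a - 3) = Real.exp ((a-3) * Real.log 2) := by
    rw [Real.rpow_def_of_pos (by norm_num), mul_comm]
  have h3 : 1 + (a-3) * Real.log 2 ≤ Real.exp ((a-3)*Real.log 2) := by
    have := Real.add_one_le_exp ((a-3)*Real.log 2)
    linarith
  have hl2 : (0.6931471803:ℝ) < Real.log 2 := Real.log_two_gt_d9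
  have ha3 : 0 ≤ a - 3 := by linarith
  nlinarith [mul_le_mul_of_nonneg_left h3 (by norm_num : (0:ℝ) ≤ 4),
    mul_le_mul_of_nonneg_left hl2.le ha3]

lemma aux_final {q a : ℝ} (hq : 1 ≤ q) (ha : 2 < a) (hqa : q ≤ 1 + a) :
    q ^ (a/2) ≤ 2 ^ (a-1) * (1 + q ^ (a/2 - 1)) := by
  have hq0 : 0 < q := by linarith
  have ht1 : 1 ≤ q ^ (a/2 - 1) := Real.one_le_rpow hq (by linarith)
  have h2pos : (0:ℝ) < 2 ^ (a-1) := Real.rpow_pos_of_pos (by norm_num) _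
  rcases le_or_gt q 4 with h4 | h4
  · have : q ^ (a/2) ≤ (4:ℝ) ^ (a/2) := Real.rpow_le_rpow hq0.le h4 (by positivity)
    have h4a : (4:ℝ) ^ (a/2) = 2 ^ a := by
      rw [show (4:ℝ) = 2 ^ (2:ℝ) by
        rw [show (2:ℝ) = ((2:ℕ):ℝ) from by norm_num, Real.rpow_natCast]; norm_num,
        ← Real.rpow_mul (by norm_num)]
      norm_num
      rw [show 2 * (a/2) = a by ring]
    have h2a : (2:ℝ) ^ a = 2 ^ (a-1) * 2 := by
      rw [← Real.rpow_add_one (by norm_num : (2:ℝ) ≠ 0)]; ring_nf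
    nlinarith
  · have ha3 : 3 ≤ a := by nlinarith
    have hsplit : q ^ (a/2) = q * q ^ (a/2 - 1) := by
      rw [← Real.rpow_one_add' hq0.le (by intro h; nlinarith)]
      ring_nf
    have hq2 : q ≤ 2 ^ (a-1) := le_trans hqa (by linarith [aux_two_pow ha3])
    rw [hsplit]
    nlinarith


set_option maxHeartbeats 2000000 in
/-- Let pd be a probability density on ℝ^p with f = -log pd
m-strongly convex and minimizer θ*. Then for any a > 2,
∫ ‖θ-θ*‖^a pd(θ) dθ ≤ (p/m)^{a/2} · 2^{a-1}(1 + (1 + a/p)^{a/2-1}). -/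
theorem stmt8 {p : ℕ} (hp : 0 < p) (f : EuclideanSpace ℝ (Fin p) → ℝ)
    (pd : EuclideanSpace ℝ (Fin p) → ℝ)
    (θstar : EuclideanSpace ℝ (Fin p)) (m a : ℝ) (hm : 0 < m)
    (ha : 2 < a)
    (hconv : StrongConvexOn Set.univ m f)
    (hmin : IsMinOn f Set.univ θstar)
    (hpd : ∀ θ, pd θ = Real.exp (-f θ))
    (hprob : ∫ θ, pd θ = 1) :
    ∫ θ, ‖θ - θstar‖ ^ a * pd θ
      ≤ ((p : ℝ) / m) ^ (a / 2)
        * (2 ^ (a - 1) * (1 + (1 + a / (p : ℝ)) ^ (a / 2 - 1))) := by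
  have hp' : (0:ℝ) < p := by exact_mod_cast hp
  have ha0 : (0:ℝ) < a := by linarith
  have hpa : (0:ℝ) < (p:ℝ) + a := by linarith
  -- lam and beta
  set lam : ℝ := Real.sqrt ((p:ℝ) / ((p:ℝ) + a)) with hlam_def
  have hfrac_pos : 0 < (p:ℝ) / ((p:ℝ) + a) := by positivity
  have hfrac_lt : (p:ℝ) / ((p:ℝ) + a) < 1 := by
    rw [div_lt_one hpa]; linarith
  have hlam_pos : 0 < lam := Real.sqrt_pos.2 hfrac_pos
  have hlam_sq : lam ^ 2 = (p:ℝ) / ((p:ℝ) + a) := Real.sq_sqrt hfrac_pos.le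
  have hlam_lt : lam < 1 := by
    nlinarith [hlam_sq, hlam_pos]
  set β : ℝ := m / 2 * (a / ((p:ℝ) + a)) with hβ_def
  have hβ_pos : 0 < β := by positivity
  -- Step 1: f lower bound
  have hfc : ∀ θ, f θstar + m / 2 * ‖θ - θstar‖ ^ 2 ≤ f θ := by
    intro θ
    have key : ∀ t : ℝ, t ∈ Set.Ioo (0:ℝ) 1 →
        f θstar + (1 - t) * (m / 2 * ‖θ - θstar‖ ^ 2) ≤ f θ := by
      intro t ht
      have h1 := hconv.2 (Set.mem_univ θ) (Set.mem_univ θstar) ht.1.le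
        (by linarith [ht.2] : (0:ℝ) ≤ 1 - t) (by ring)
      have h2 := hmin (Set.mem_univ (t • θ + (1 - t) • θstar))
      simp only [smul_eq_mul] at h1
      have h2' : f θstar ≤ f (t • θ + (1 - t) • θstar) := h2
      have ht0 : 0 < t := ht.1
      nlinarith [h1, h2', mul_pos ht0 (sub_pos.2 ht.2)]
    have htend : Filter.Tendsto
        (fun t : ℝ => f θstar + (1 - t) * (m / 2 * ‖θ - θstar‖ ^ 2)) (nhdsWithin 0 (Set.Ioi 0))
        (nhds (f θstar + (1 - 0) * (m / 2 * ‖θ - θstar‖ ^ 2))) := by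
      apply Filter.Tendsto.mono_left _ nhdsWithin_le_nhds
      exact (Filter.Tendsto.const_add _ (((continuous_const.sub continuous_id).mul
        continuous_const).tendsto 0))
    have : f θstar + (1 - 0) * (m / 2 * ‖θ - θstar‖ ^ 2) ≤ f θ := by
      refine le_of_tendsto htend ?_
      filter_upwards [Ioo_mem_nhdsGT_of_mem (Set.mem_Ico.2 ⟨le_refl (0:ℝ), one_pos⟩)] with t ht
      exact key t ht
    linarith
  -- continuity / measurability
  have hconvex : ConvexOn ℝ Set.univ f := (hconv.strictConvexOn hm).convexOn
  have hcontf : Continuous f := by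
    rw [← continuousOn_univ]
    exact hconvex.continuousOn isOpen_univ
  have hcontpd : Continuous pd := by
    have : pd = fun θ => Real.exp (-f θ) := funext hpd
    rw [this]; exact (hcontf.neg).rexp
  have hpd_nonneg : ∀ θ, 0 ≤ pd θ := fun θ => (hpd θ) ▸ (Real.exp_pos _).le
  -- lintegral of pd is 1
  have hlint_pd : ∫⁻ θ, ENNReal.ofReal (pd θ) = 1 := by
    have h1 : ∫ θ, pd θ = (∫⁻ θ, ENNReal.ofReal (pd θ)).toReal :=
      integral_eq_lintegral_of_nonneg_ae (Filter.Eventually.of_forall hpd_nonneg)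
        hcontpd.aestronglyMeasurable
    rw [hprob] at h1
    have hne : ∫⁻ θ, ENNReal.ofReal (pd θ) ≠ ⊤ := by
      intro h
      rw [h] at h1; simp at h1
    rw [← ENNReal.ofReal_toReal hne, ← h1]
    norm_num
  -- Step D: key pointwise bound
  have hkey : ∀ u : EuclideanSpace ℝ (Fin p),
      pd (θstar + u) * Real.exp (β * ‖u‖ ^ 2) ≤ Real.exp (-f (θstar + lam • u)) := by
    intro u
    have hcomb : lam • (θstar + u) + (1 - lam) • θstar = θstar + lam • u := by
      rw [smul_add, sub_smul, one_smul]; abel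
    have hnorm : ‖(θstar + u) - θstar‖ = ‖u‖ := by
      rw [add_sub_cancel_left]
    have h1 := hconv.2 (Set.mem_univ (θstar + u)) (Set.mem_univ θstar) hlam_pos.le
      (by linarith : (0:ℝ) ≤ 1 - lam) (by ring)
    rw [hcomb, hnorm] at h1
    simp only [smul_eq_mul] at h1
    have h2 := hfc (θstar + u)
    rw [hnorm] at h2
    have hβeq : β = m / 2 * (1 - lam ^ 2) := by
      rw [hβ_def, hlam_sq]
      field_simp
      ring
    have hexp : f (θstar + lam • u) ≤ f (θstar + u) - β * ‖u‖ ^ 2 := by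
      rw [hβeq]
      nlinarith [h1, h2, sq_nonneg ‖u‖]
    rw [hpd (θstar + u), ← Real.exp_add]
    exact Real.exp_le_exp.2 (by linarith)
  -- Step E: scaling identity
  have hfinrank : Module.finrank ℝ (EuclideanSpace ℝ (Fin p)) = p := by
    simp [finrank_euclideanSpace]
  have hscale : ∫⁻ u, ENNReal.ofReal (Real.exp (-f (θstar + lam • u)))
      = ENNReal.ofReal ((lam ^ p)⁻¹) := by
    have hlam_ne : lam ≠ 0 := hlam_pos.ne'
    set g : EuclideanSpace ℝ (Fin p) → ENNReal :=
      fun θ => ENNReal.ofReal (Real.exp (-f θ)) with hg_def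
    have hF_meas : Measurable (fun v : EuclideanSpace ℝ (Fin p) =>
        ENNReal.ofReal (Real.exp (-f (θstar + v)))) := by
      apply Measurable.ennreal_ofReal
      exact (((hcontf.comp (continuous_const.add continuous_id)).neg).rexp).measurable
    calc ∫⁻ u, ENNReal.ofReal (Real.exp (-f (θstar + lam • u)))
        = ∫⁻ v, ENNReal.ofReal (Real.exp (-f (θstar + v)))
            ∂(Measure.map (fun u : EuclideanSpace ℝ (Fin p) => lam • u) volume) :=
          (lintegral_map hF_meas (measurable_id.const_smul lam)).symm
      _ = ENNReal.ofReal |(lam ^ p)⁻¹| * ∫⁻ v, ENNReal.ofReal (Real.exp (-f (θstar + v))) := by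
          rw [Measure.map_addHaar_smul (volume) hlam_ne, hfinrank, lintegral_smul_measure, smul_eq_mul]
      _ = ENNReal.ofReal |(lam ^ p)⁻¹| * ∫⁻ θ, ENNReal.ofReal (Real.exp (-f θ)) := by
          rw [lintegral_add_left_eq_self (fun θ => ENNReal.ofReal (Real.exp (-f θ))) θstar]
      _ = ENNReal.ofReal ((lam ^ p)⁻¹) := by
          have h1 : ∫⁻ θ, ENNReal.ofReal (Real.exp (-f θ)) = 1 := by
            simp_rw [← hpd]; exact hlint_pd
          rw [h1, mul_one, abs_of_nonneg (by positivity)]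
  -- pointwise moment bound
  set K : ℝ := (((p:ℝ) + a) / (m * Real.exp 1)) ^ (a / 2) with hK_def
  have hK_pos : 0 < K := Real.rpow_pos_of_pos (by positivity) _
  have hmom : ∀ u : EuclideanSpace ℝ (Fin p),
      ‖u‖ ^ a ≤ K * Real.exp (β * ‖u‖ ^ 2) := by
    intro u
    have hn : (0:ℝ) ≤ ‖u‖ := norm_nonneg u
    have hx : (0:ℝ) ≤ β * ‖u‖ ^ 2 := by positivity
    have h1 := aux_rpow_exp hx (by linarith : (0:ℝ) < a / 2)
    have h2 : (β * ‖u‖ ^ 2) ^ (a/2) = β ^ (a/2) * (‖u‖ ^ 2 : ℝ) ^ (a/2) :=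
      Real.mul_rpow hβ_pos.le (by positivity)
    have h3 : (‖u‖ ^ 2 : ℝ) ^ (a/2) = ‖u‖ ^ a := by
      rw [← Real.rpow_natCast ‖u‖ 2, ← Real.rpow_mul hn]
      congr 1
      push_cast
      ring
    have hβr : (0:ℝ) < β ^ (a/2) := Real.rpow_pos_of_pos hβ_pos _
    have hC : ((a/2) / Real.exp 1) ^ (a/2) = K * β ^ (a/2) := by
      rw [hK_def, ← Real.mul_rpow (by positivity) hβ_pos.le]
      congr 1
      rw [hβ_def]
      field_simp
    have h5 : β ^ (a/2) * ‖u‖ ^ a ≤ β ^ (a/2) * (K * Real.exp (β * ‖u‖ ^ 2)) := by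
      calc β ^ (a/2) * ‖u‖ ^ a = (β * ‖u‖ ^ 2) ^ (a/2) := by rw [h2, h3]
        _ ≤ ((a/2) / Real.exp 1) ^ (a/2) * Real.exp (β * ‖u‖ ^ 2) := h1
        _ = β ^ (a/2) * (K * Real.exp (β * ‖u‖ ^ 2)) := by rw [hC]; ring
    exact (mul_le_mul_iff_right₀ hβr).1 h5
  -- main lintegral chain
  have main_lint : ∫⁻ θ, ENNReal.ofReal (‖θ - θstar‖ ^ a * pd θ)
      ≤ ENNReal.ofReal (K * (lam ^ p)⁻¹) := by
    calc ∫⁻ θ, ENNReal.ofReal (‖θ - θstar‖ ^ a * pd θ)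
        = ∫⁻ u, ENNReal.ofReal (‖(θstar + u) - θstar‖ ^ a * pd (θstar + u)) :=
          (lintegral_add_left_eq_self
            (fun θ => ENNReal.ofReal (‖θ - θstar‖ ^ a * pd θ)) θstar).symm
      _ = ∫⁻ u, ENNReal.ofReal (‖u‖ ^ a * pd (θstar + u)) := by
          simp_rw [add_sub_cancel_left]
      _ ≤ ∫⁻ u, ENNReal.ofReal (K * Real.exp (-f (θstar + lam • u))) := by
          apply lintegral_mono
          intro u
          apply ENNReal.ofReal_le_ofReal
          calc ‖u‖ ^ a * pd (θstar + u)
              ≤ (K * Real.exp (β * ‖u‖ ^ 2)) * pd (θstar + u) :=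
                mul_le_mul_of_nonneg_right (hmom u) (hpd_nonneg _)
            _ = K * (pd (θstar + u) * Real.exp (β * ‖u‖ ^ 2)) := by ring
            _ ≤ K * Real.exp (-f (θstar + lam • u)) :=
                mul_le_mul_of_nonneg_left (hkey u) hK_pos.le
      _ = ENNReal.ofReal K * ∫⁻ u, ENNReal.ofReal (Real.exp (-f (θstar + lam • u))) := by
          simp_rw [ENNReal.ofReal_mul hK_pos.le]
          rw [lintegral_const_mul' _ _ ENNReal.ofReal_ne_top]
      _ = ENNReal.ofReal K * ENNReal.ofReal ((lam ^ p)⁻¹) := by rw [hscale]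
      _ = ENNReal.ofReal (K * (lam ^ p)⁻¹) := (ENNReal.ofReal_mul hK_pos.le).symm
  have hLHS : ∫ θ, ‖θ - θstar‖ ^ a * pd θ ≤ K * (lam ^ p)⁻¹ := by
    have hmeas : AEStronglyMeasurable (fun θ : EuclideanSpace ℝ (Fin p) =>
        ‖θ - θstar‖ ^ a * pd θ) volume := by
      apply Continuous.aestronglyMeasurable
      exact (((continuous_id.sub continuous_const).norm).rpow_const
        (fun x => Or.inr (by linarith))).mul hcontpd
    have hnn : 0 ≤ᵐ[(volume : Measure (EuclideanSpace ℝ (Fin p)))]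
        fun θ => ‖θ - θstar‖ ^ a * pd θ :=
      Filter.Eventually.of_forall fun θ =>
        mul_nonneg (Real.rpow_nonneg (norm_nonneg _) _) (hpd_nonneg θ)
    rw [integral_eq_lintegral_of_nonneg_ae hnn hmeas]
    have h := ENNReal.toReal_mono ENNReal.ofReal_ne_top main_lint
    rwa [ENNReal.toReal_ofReal (by positivity)] at h
  -- final numeric bound
  set q : ℝ := 1 + a / (p:ℝ) with hq_def
  have hap : 0 < a / (p:ℝ) := by positivity
  have hq1 : 1 < q := by rw [hq_def]; linarith
  have hq0 : (0:ℝ) < q := by linarith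
  have hqa : q ≤ 1 + a := by
    rw [hq_def]
    have hp1 : (1:ℝ) ≤ (p:ℝ) := by exact_mod_cast hp
    have : a / (p:ℝ) ≤ a := by
      rw [div_le_iff₀ hp']
      nlinarith
    linarith
  have he1 : (0:ℝ) < Real.exp 1 := Real.exp_pos 1
  have hfrac_inv : ((p:ℝ) / ((p:ℝ) + a))⁻¹ = q := by
    rw [hq_def]; field_simp
  have hlamp : ((lam ^ p : ℝ))⁻¹ = q ^ ((p:ℝ)/2) := by
    have h1 : (lam : ℝ) ^ p = ((p:ℝ) / ((p:ℝ) + a)) ^ ((p:ℝ)/2) := by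
      rw [hlam_def, Real.sqrt_eq_rpow,
        ← Real.rpow_natCast (((p:ℝ) / ((p:ℝ) + a)) ^ ((1:ℝ)/2)) p,
        ← Real.rpow_mul hfrac_pos.le]
      congr 1
      ring
    rw [h1, ← Real.inv_rpow hfrac_pos.le, hfrac_inv]
  have hmono : K * (lam ^ p)⁻¹
      ≤ ((p:ℝ) / m) ^ (a / 2) * (2 ^ (a - 1) * (1 + q ^ (a / 2 - 1))) := by
    rw [hlamp, hK_def]
    have hbase : ((p:ℝ) + a) / (m * Real.exp 1) = ((p:ℝ)/m) * (q / Real.exp 1) := by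
      rw [hq_def]; field_simp
    rw [hbase, Real.mul_rpow (by positivity) (by positivity),
      Real.div_rpow hq0.le he1.le]
    have hqp : q ^ ((p:ℝ)/2) ≤ Real.exp 1 ^ (a/2) := by
      rw [Real.exp_one_rpow, Real.rpow_def_of_pos hq0]
      apply Real.exp_le_exp.2
      have hlogq : Real.log q ≤ a / (p:ℝ) := by
        have h := Real.log_le_sub_one_of_pos hq0
        rw [hq_def] at h
        linarith
      calc Real.log q * ((p:ℝ)/2) ≤ (a / (p:ℝ)) * ((p:ℝ)/2) := by
            apply mul_le_mul_of_nonneg_right hlogq (by positivity)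
        _ = a / 2 := by field_simp
    have haux := aux_final hq1.le ha hqa
    have hpm : (0:ℝ) ≤ ((p:ℝ)/m) ^ (a/2) := by positivity
    have hE : (0:ℝ) < Real.exp 1 ^ (a/2) := by positivity
    have hqr : (0:ℝ) ≤ q ^ (a/2) := by positivity
    calc ((p:ℝ)/m) ^ (a/2) * (q ^ (a/2) / Real.exp 1 ^ (a/2)) * q ^ ((p:ℝ)/2)
        ≤ ((p:ℝ)/m) ^ (a/2) * (q ^ (a/2) / Real.exp 1 ^ (a/2)) * Real.exp 1 ^ (a/2) := by
          apply mul_le_mul_of_nonneg_left hqp (by positivity)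
      _ = ((p:ℝ)/m) ^ (a/2) * q ^ (a/2) := by field_simp
      _ ≤ ((p:ℝ)/m) ^ (a/2) * (2 ^ (a - 1) * (1 + q ^ (a/2 - 1))) :=
          mul_le_mul_of_nonneg_left haux hpm
  linarith [hLHS, hmono]
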